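/- For every nonzero real λ, every real x, and every integer n ≥ 0, the type 2 degenerate Bernoulli polynomials of the second kind satisfy b*_{n,λ}(x) = Σ_{l=0}^{n} C(n,l) b*_{l,λ} (x)_{n−l}, where b*_{l,λ} = b*_{l,λ}(0) are the type 2 degenerate Bernoulli numbers of the second kind and (x)_m = x(x−1)···(x−m+1) with (x)_0 = 1 is the falling factorial. -/

import Mathlib

open Real Topology Filter FormalMultilinearSeries
open scoped ENNReal NNReal

/-- If a power series converges to `F t` for all `t` in a punctured neighborhood of `0`,
then its sum function has `F` as eventual value and is a power series rep. -/
lemma aux_hasFPowerSeriesAt {a : ℕ → ℝ} {F : ℝ → ℝ} {ε : ℝ} (hε : 0 < ε)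
    (h : ∀ t : ℝ, t ≠ 0 → |t| < ε → HasSum (fun n => a n * t ^ n) (F t)) :
    HasFPowerSeriesAt (ofScalars ℝ a).sum (ofScalars ℝ a) 0 ∧
      ∀ t : ℝ, t ≠ 0 → |t| < ε / 2 → (ofScalars ℝ a).sum t = F t := by
  set p := ofScalars ℝ a with hp
  have hεhalf : (0:ℝ) < ε / 2 := by positivity
  have hsum : Summable fun n => a n * (ε / 2) ^ n :=
    (h (ε / 2) hεhalf.ne' (by rw [abs_of_pos hεhalf]; linarith)).summable
  have htend := hsum.tendsto_atTop_zero.norm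
  have hbdd : BddAbove (Set.range fun n => ‖a n * (ε / 2) ^ n‖) := htend.bddAbove_range
  obtain ⟨C, hC⟩ := hbdd
  have hrad : ((ε / 2).toNNReal : ℝ≥0∞) ≤ p.radius := by
    apply p.le_radius_of_bound C
    intro n
    have : ‖p n‖ = |a n| := by
      rw [hp, ofScalars_norm]; rfl
    rw [this]
    have h2 : ((ε/2).toNNReal : ℝ) = ε / 2 := Real.coe_toNNReal _ hεhalf.le
    rw [h2]
    have := hC (Set.mem_range_self n)
    calc |a n| * (ε/2) ^ n = ‖a n * (ε/2)^n‖ := by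
            rw [norm_mul, norm_pow, Real.norm_eq_abs, Real.norm_eq_abs,
              abs_of_pos hεhalf]
      _ ≤ C := this
  have hradpos : 0 < p.radius :=
    lt_of_lt_of_le (by simpa using (Real.toNNReal_pos.2 hεhalf : 0 < (ε/2).toNNReal)) hrad
  have hball := p.hasFPowerSeriesOnBall hradpos
  refine ⟨hball.hasFPowerSeriesAt, fun t ht htε => ?_⟩
  have htmem : t ∈ Metric.eball (0:ℝ) p.radius := by
    rw [EMetric.mem_ball, edist_zero_right]
    calc (‖t‖₊ : ℝ≥0∞) < ((ε/2).toNNReal : ℝ≥0∞) := by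
          rw [ENNReal.coe_lt_coe, ← NNReal.coe_lt_coe, coe_nnnorm, Real.norm_eq_abs,
            Real.coe_toNNReal _ hεhalf.le]
          exact htε
      _ ≤ p.radius := hrad
  have hs1 : HasSum (fun n => a n * t ^ n) (p.sum t) := by
    have h2 := p.hasSum htmem
    have h3 : (fun n => p n fun _ => t) = fun n => a n * t ^ n :=
      funext fun n => by rw [hp, ofScalars_apply_eq, smul_eq_mul]
    rwa [h3] at h2
  exact hs1.unique (h t ht (by linarith))

/-- Uniqueness of power series coefficients from agreement on a punctured neighborhood. -/
lemma coeff_unique {a b : ℕ → ℝ} {F : ℝ → ℝ}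
    (ha : ∀ᶠ t : ℝ in 𝓝[≠] 0, HasSum (fun n => a n * t ^ n) (F t))
    (hb : ∀ᶠ t : ℝ in 𝓝[≠] 0, HasSum (fun n => b n * t ^ n) (F t)) : a = b := by
  have hab := ha.and hb
  rw [eventually_nhdsWithin_iff] at hab
  rw [Metric.eventually_nhds_iff] at hab
  obtain ⟨ε, hε, H⟩ := hab
  have Ha : ∀ t : ℝ, t ≠ 0 → |t| < ε → HasSum (fun n => a n * t ^ n) (F t) := fun t ht htε =>
    (H (by simpa [Real.dist_eq] using htε) ht).1
  have Hb : ∀ t : ℝ, t ≠ 0 → |t| < ε → HasSum (fun n => b n * t ^ n) (F t) := fun t ht htε =>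
    (H (by simpa [Real.dist_eq] using htε) ht).2
  obtain ⟨hpa, hea⟩ := aux_hasFPowerSeriesAt hε Ha
  obtain ⟨hpb, heb⟩ := aux_hasFPowerSeriesAt hε Hb
  set p := ofScalars ℝ a
  set q := ofScalars ℝ b
  have heq' : p.sum =ᶠ[𝓝[≠] (0:ℝ)] q.sum := by
    have : ∀ᶠ t : ℝ in 𝓝[≠] 0, t ≠ 0 ∧ |t| < ε / 2 := by
      filter_upwards [self_mem_nhdsWithin,
        eventually_nhdsWithin_of_eventually_nhds
          (Metric.eventually_nhds_iff.2 ⟨ε/2, by positivity,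
            fun {y} hy => by simpa [Real.dist_eq] using hy⟩)] with t h1 h2
      exact ⟨h1, h2⟩
    filter_upwards [this] with t ⟨h1, h2⟩
    rw [hea t h1 h2, heb t h1 h2]
  have h0 : p.sum 0 = q.sum 0 := by
    have hca : Filter.Tendsto p.sum (𝓝[≠] (0:ℝ)) (𝓝 (p.sum 0)) :=
      (hpa.continuousAt.continuousWithinAt).tendsto
    have hcb : Filter.Tendsto q.sum (𝓝[≠] (0:ℝ)) (𝓝 (q.sum 0)) :=
      (hpb.continuousAt.continuousWithinAt).tendsto
    have hca' : Filter.Tendsto p.sum (𝓝[≠] (0:ℝ)) (𝓝 (q.sum 0)) := hcb.congr' heq'.symm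
    exact tendsto_nhds_unique hca hca'
  have heqnhds : p.sum =ᶠ[𝓝 (0:ℝ)] q.sum := by
    rw [← nhdsNE_sup_pure (0:ℝ)]
    exact Filter.eventually_sup.mpr ⟨heq', Filter.eventually_pure.mpr h0⟩
  have : p = q := (hpa.congr heqnhds).eq_formalMultilinearSeries hpb
  exact (ofScalars_series_eq_iff ℝ a b).mp this


lemma binom_ratio (x : ℝ) (m : ℕ) :
    ((m:ℝ) + 1) * ((∏ i ∈ Finset.range (m+1), (x - (i:ℝ))) / (m+1).factorial) =
      (x - m) * ((∏ i ∈ Finset.range m, (x - (i:ℝ))) / m.factorial) := by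
  rw [Finset.prod_range_succ, Nat.factorial_succ]
  have h1 : ((m.factorial : ℝ)) ≠ 0 := Nat.cast_ne_zero.2 m.factorial_ne_zero
  have h2 : ((m:ℝ) + 1) ≠ 0 := by positivity
  field_simp
  push_cast
  ring

lemma binom_summable_norm (x : ℝ) {t : ℝ} (ht : |t| < 1) :
    Summable fun m => ‖(∏ i ∈ Finset.range m, (x - (i:ℝ))) / m.factorial * t ^ m‖ := by
  set u : ℕ → ℝ := fun m => (∏ i ∈ Finset.range m, (x - (i:ℝ))) / m.factorial * t ^ m with hu
  set r : ℝ := (1 + |t|) / 2 with hr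
  have hr1 : r < 1 := by rw [hr]; linarith
  have htr : |t| < r := by rw [hr]; linarith
  have hr0 : 0 < r - |t| := by linarith
  apply summable_of_ratio_norm_eventually_le hr1
  filter_upwards [Filter.eventually_ge_atTop ⌈|x| * |t| / (r - |t|)⌉₊] with m hm
  have hmc : |x| * |t| / (r - |t|) ≤ (m:ℝ) := by
    have := Nat.ceil_le.mp hm
    exact_mod_cast this
  have hkey : (|x| + m) * |t| ≤ r * ((m:ℝ) + 1) := by
    have h1 : |x| * |t| ≤ (m:ℝ) * (r - |t|) := by
      rw [div_le_iff₀ hr0] at hmc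
      linarith
    nlinarith [abs_nonneg t, htr.le]
  have hrec : u (m+1) = u m * ((x - m) * t / ((m:ℝ) + 1)) := by
    rw [hu]
    simp only
    rw [Finset.prod_range_succ, Nat.factorial_succ, pow_succ]
    have h1 : ((m.factorial : ℝ)) ≠ 0 := Nat.cast_ne_zero.2 m.factorial_ne_zero
    have h2 : ((m:ℝ) + 1) ≠ 0 := by positivity
    push_cast
    field_simp
  show ‖‖u (m+1)‖‖ ≤ r * ‖‖u m‖‖
  rw [norm_norm, norm_norm, hrec, norm_mul]
  have hb : ‖(x - m) * t / ((m:ℝ)+1)‖ ≤ r := by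
    rw [norm_div, norm_mul, Real.norm_eq_abs, Real.norm_eq_abs, Real.norm_eq_abs,
      abs_of_pos (by positivity : (0:ℝ) < (m:ℝ)+1), div_le_iff₀ (by positivity)]
    calc |x - m| * |t| ≤ (|x| + m) * |t| := by
          have : |x - (m:ℝ)| ≤ |x| + m := by
            rcases abs_cases (x - (m:ℝ)) with ⟨h1, _⟩ | ⟨h1, _⟩ <;>
              rcases abs_cases x with ⟨h2, _⟩ | ⟨h2, _⟩ <;>
              have hm0 : (0:ℝ) ≤ (m:ℝ) := Nat.cast_nonneg m <;> linarith
          exact mul_le_mul_of_nonneg_right this (abs_nonneg t)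
      _ ≤ r * ((m:ℝ)+1) := hkey
  calc ‖u m‖ * ‖(x - m) * t / ((m:ℝ)+1)‖ ≤ ‖u m‖ * r :=
        mul_le_mul_of_nonneg_left hb (norm_nonneg _)
    _ = r * ‖u m‖ := mul_comm _ _

lemma hasSum_binomial (x : ℝ) {t : ℝ} (ht : |t| < 1) :
    HasSum (fun m => (∏ i ∈ Finset.range m, (x - (i:ℝ))) / m.factorial * t ^ m)
      ((1 + t) ^ x) := by
  set a : ℕ → ℝ := fun m => (∏ i ∈ Finset.range m, (x - (i:ℝ))) / m.factorial with haa
  set p := ofScalars ℝ a with hpp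
  -- radius at least 1
  have hrad : 1 ≤ p.radius := by
    apply ENNReal.le_of_forall_nnreal_lt
    intro r hr
    have hr1 : (r : ℝ) < 1 := by exact_mod_cast hr
    apply p.le_radius_of_summable
    have hs := binom_summable_norm x (t := (r:ℝ)) (by rwa [abs_of_nonneg r.coe_nonneg])
    refine hs.congr fun n => ?_
    have h1 : ‖p n‖ = ‖a n‖ := by rw [hpp, ofScalars_norm]
    rw [h1, norm_mul, norm_pow, Real.norm_eq_abs (r:ℝ), abs_of_nonneg r.coe_nonneg]
  have hpos : (0:ℝ≥0∞) < p.radius := lt_of_lt_of_le one_pos hrad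
  have HB := p.hasFPowerSeriesOnBall hpos
  set f := p.sum with hf
  have hmem : ∀ s : ℝ, |s| < 1 → s ∈ Metric.eball (0:ℝ) p.radius := by
    intro s hs
    rw [EMetric.mem_ball, edist_zero_right]
    calc (‖s‖₊ : ℝ≥0∞) < 1 := by
          rw [← ENNReal.coe_one, ENNReal.coe_lt_coe, ← NNReal.coe_lt_coe, coe_nnnorm,
            Real.norm_eq_abs, NNReal.coe_one]
          exact hs
      _ ≤ p.radius := hrad
  have hS0 : ∀ s : ℝ, |s| < 1 → HasSum (fun m => a m * s ^ m) (f s) := by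
    intro s hs
    have h2 := p.hasSum (hmem s hs)
    have h3 : (fun n => p n fun _ => s) = fun n => a n * s ^ n :=
      funext fun n => by rw [hpp, ofScalars_apply_eq, smul_eq_mul]
    rwa [h3] at h2
  have HD := HB.fderiv
  have hS1 : ∀ s : ℝ, |s| < 1 →
      HasSum (fun n : ℕ => (((n:ℝ)+1) * a (n+1)) * s ^ (n+1)) (s * deriv f s) := by
    intro s hs
    have h1 := HD.hasSum (hmem s hs)
    rw [zero_add] at h1
    have h2 := (ContinuousLinearMap.apply ℝ ℝ s).hasSum h1
    have h3 : (fun n => (ContinuousLinearMap.apply ℝ ℝ s) (p.derivSeries n fun _ => s))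
        = fun n : ℕ => (((n:ℝ)+1) * a (n+1)) * s ^ (n+1) := by
      funext n
      rw [ContinuousLinearMap.apply_apply, p.derivSeries_apply_diag]
      rw [hpp, ofScalars_apply_eq]
      push_cast
      rw [nsmul_eq_mul, smul_eq_mul]
      push_cast
      ring
    rw [h3] at h2
    have h4 : (ContinuousLinearMap.apply ℝ ℝ s) (fderiv ℝ f s) = s * deriv f s := by
      rw [ContinuousLinearMap.apply_apply]
      have : (fderiv ℝ f s) s = (fderiv ℝ f s) (s • (1:ℝ)) := by rw [smul_eq_mul, mul_one]
      rw [this, (fderiv ℝ f s).map_smul, smul_eq_mul]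
      rfl
    rwa [h4] at h2
  -- the ODE (1+s) f' = x f on the open unit interval
  have hODE : ∀ s : ℝ, |s| < 1 → (1 + s) * deriv f s = x * f s := by
    have hne : ∀ s : ℝ, s ≠ 0 → |s| < 1 → (1 + s) * deriv f s = x * f s := by
      intro s hs0 hs
      have S1 := hS1 s hs
      have S1' : HasSum (fun m : ℕ => (m:ℝ) * a m * s ^ m) (s * deriv f s) := by
        rw [← Function.Injective.hasSum_iff (f := fun m : ℕ => (m:ℝ) * a m * s ^ m)
          Nat.succ_injective (by
            intro m hm
            have hm0 : m = 0 := by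
              rcases m with _ | k
              · rfl
              · exact absurd ⟨k, rfl⟩ hm
            simp [hm0])]
        refine S1.congr_fun fun n => ?_
        simp only [Function.comp_apply, Nat.succ_eq_add_one]
        push_cast
        ring
      have S0 := hS0 s hs
      have S2 : HasSum (fun m : ℕ => s * (x * (a m * s ^ m) - (m:ℝ) * a m * s ^ m))
          (s * (x * f s - s * deriv f s)) := ((S0.mul_left x).sub S1').mul_left s
      have hterm : (fun m : ℕ => s * (x * (a m * s ^ m) - (m:ℝ) * a m * s ^ m))
          = fun m : ℕ => (((m:ℝ)+1) * a (m+1)) * s ^ (m+1) := by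
        funext m
        rw [binom_ratio x m]
        rw [pow_succ]
        ring
      rw [hterm] at S2
      have huniq := S2.unique (hS1 s hs)
      have : s * (x * f s - s * deriv f s) = s * deriv f s := huniq
      have h5 := mul_left_cancel₀ hs0 this
      linarith [h5]
    -- continuity at 0
    intro s hs
    rcases eq_or_ne s 0 with rfl | hs0
    · have hccf : ContinuousAt f 0 := HB.hasFPowerSeriesAt.continuousAt
      have hccd : ContinuousAt (fun u => deriv f u) 0 := by
        have h1 : ContinuousAt (fderiv ℝ f) 0 := HD.hasFPowerSeriesAt.continuousAt
        have h2 : ContinuousAt (fun L : ℝ →L[ℝ] ℝ => L 1) (fderiv ℝ f 0) :=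
          (ContinuousLinearMap.apply ℝ ℝ (1:ℝ)).continuous.continuousAt
        have := h2.comp h1
        refine this.congr ?_
        filter_upwards with u
        rfl
      have hφ : ContinuousAt (fun u => (1+u) * deriv f u - x * f u) 0 :=
        ((continuousAt_const.add continuousAt_id).mul hccd).sub (continuousAt_const.mul hccf)
      have hev : ∀ᶠ u in 𝓝[≠] (0:ℝ), (1+u) * deriv f u - x * f u = 0 := by
        have : ∀ᶠ u in 𝓝[≠] (0:ℝ), u ≠ 0 ∧ |u| < 1 := by
          filter_upwards [self_mem_nhdsWithin,
            eventually_nhdsWithin_of_eventually_nhds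
              (Metric.eventually_nhds_iff.2 ⟨1, one_pos,
                fun {y} hy => by simpa [Real.dist_eq] using hy⟩)] with u h1 h2
          exact ⟨h1, h2⟩
        filter_upwards [this] with u ⟨h1, h2⟩
        rw [hne u h1 h2, sub_self]
      have ht1 : Filter.Tendsto (fun u => (1+u) * deriv f u - x * f u) (𝓝[≠] (0:ℝ))
          (𝓝 ((1+(0:ℝ)) * deriv f 0 - x * f 0)) := hφ.continuousWithinAt.tendsto
      have ht2 : Filter.Tendsto (fun u => (1+u) * deriv f u - x * f u) (𝓝[≠] (0:ℝ))
          (𝓝 0) :=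
        Filter.Tendsto.congr' (hev.mono fun u hu => hu.symm) tendsto_const_nhds
      have := tendsto_nhds_unique ht1 ht2
      linarith [this]
    · exact hne s hs0 hs
  -- constancy of f s * (1+s)^(-x)
  have hf0 : f 0 = 1 := by
    have := hS0 0 (by norm_num)
    have h1 := hasSum_single (f := fun m => a m * (0:ℝ) ^ m) 0
      (fun m hm => by simp [zero_pow hm])
    simp only [pow_zero, mul_one] at h1
    have h2 := this.unique h1
    rw [h2, haa]
    simp
  set g : ℝ → ℝ := fun s => f s * (1+s) ^ (-x) with hg
  have hg' : ∀ s ∈ Set.Ioo (-1:ℝ) 1, HasDerivAt g 0 s := by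
    intro s hs
    have h1s : 0 < 1 + s := by have := hs.1; linarith
    have habs : |s| < 1 := abs_lt.mpr ⟨hs.1, hs.2⟩
    have hfd : HasDerivAt f (deriv f s) s := by
      have hA : AnalyticAt ℝ f s := HB.analyticOnNhd s (hmem s habs)
      exact hA.differentiableAt.hasDerivAt
    have hbase : HasDerivAt (fun u : ℝ => 1 + u) 1 s := by
      simpa using (hasDerivAt_id s).const_add (1:ℝ)
    have hrp : HasDerivAt (fun u : ℝ => (1+u) ^ (-x)) ((-x) * (1+s) ^ (-x-1) * 1) s :=
      (Real.hasDerivAt_rpow_const (p := -x) (Or.inl h1s.ne')).comp s hbase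
    have hmul := hfd.mul hrp
    have hval : deriv f s * (1+s) ^ (-x) + f s * ((-x) * (1+s) ^ (-x-1) * 1) = 0 := by
      have hpow := Real.rpow_add h1s 1 (-x-1)
      rw [Real.rpow_one] at hpow
      have he : (1:ℝ) + (-x-1) = -x := by ring
      rw [he] at hpow
      rw [hpow]
      have := hODE s habs
      linear_combination ((1+s) ^ (-x-1)) * this
    rwa [hval] at hmul
  have hgt : ∀ s, |s| < 1 → g s = g 0 := by
    intro s hs
    rcases le_or_gt 0 s with h0s | h0s
    · have hcont : ContinuousOn g (Set.Icc 0 s) := by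
        intro y hy
        have hy' : y ∈ Set.Ioo (-1:ℝ) 1 := by
          constructor
          · linarith [hy.1]
          · have := hy.2; have := abs_lt.mp hs; linarith
        exact ((hg' y hy').continuousAt).continuousWithinAt
      have := constant_of_has_deriv_right_zero hcont
        (fun y hy => (hg' y (by
          obtain ⟨h1, h2⟩ := hy
          constructor
          · linarith
          · have := abs_lt.mp hs; linarith)).hasDerivWithinAt)
      exact this s (Set.right_mem_Icc.2 h0s)
    · have hcont : ContinuousOn g (Set.Icc s 0) := by
        intro y hy
        have hy' : y ∈ Set.Ioo (-1:ℝ) 1 := by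
          constructor
          · have := abs_lt.mp hs; linarith [hy.1]
          · linarith [hy.2]
        exact ((hg' y hy').continuousAt).continuousWithinAt
      have := constant_of_has_deriv_right_zero hcont
        (fun y hy => (hg' y (by
          obtain ⟨h1, h2⟩ := hy
          constructor
          · have := abs_lt.mp hs; linarith
          · linarith)).hasDerivWithinAt)
      have h00 := this 0 (Set.right_mem_Icc.2 h0s.le)
      have hss := this s (Set.left_mem_Icc.2 h0s.le)
      rw [h00, hss]
  have h1t : 0 < 1 + t := by have := abs_lt.mp ht; linarith
  have hft : f t = (1 + t) ^ x := by
    have h1 := hgt t ht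
    rw [hg] at h1
    simp only at h1
    rw [hf0] at h1
    have h2 : (1 + (0:ℝ)) ^ (-x) = 1 := by norm_num
    rw [h2, one_mul] at h1
    have h3 : (1+t) ^ (-x) = ((1+t) ^ x)⁻¹ := Real.rpow_neg h1t.le x
    rw [h3] at h1
    have h4 : (1+t) ^ x ≠ 0 := (Real.rpow_pos_of_pos h1t x).ne'
    field_simp at h1
    exact h1
  have := hS0 t ht
  rwa [hft] at this



/-- For nonzero real `lam`, real `x` and `n ≥ 0`:
`b*_{n,λ}(x) = Σ_{l=0}^n C(n,l) b*_{l,λ} (x)_{n-l}`, where the type 2 degenerate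
Bernoulli polynomials of the second kind `b*` have EGF
`((1+t)-(1+t)⁻¹)/log_λ(1+t) · (1+t)^x` with `log_λ(1+t) = ((1+t)^λ-1)/λ`,
`b*_{l,λ} = b*_{l,λ}(0)`, and `(x)_m = x(x-1)⋯(x-m+1)` is the falling factorial. -/
theorem type2_degenerate_bernoulli_second_kind_binomial_expansion
    (lam : ℝ) (hlam : lam ≠ 0)
    (bstar : ℕ → ℝ → ℝ)
    (hbstar : ∀ x : ℝ, ∀ᶠ t : ℝ in 𝓝[≠] 0, HasSum
      (fun n : ℕ => bstar n x * t ^ n / (n.factorial : ℝ))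
      (((1 + t) - (1 + t)⁻¹) / (((1 + t) ^ lam - 1) / lam) * (1 + t) ^ x))
    (x : ℝ) (n : ℕ) :
    bstar n x =
      ∑ l ∈ Finset.range (n + 1), (n.choose l : ℝ) * bstar l 0 *
        ∏ i ∈ Finset.range (n - l), (x - i) := by
  classical
  set A : ℕ → ℝ := fun m => bstar m x / m.factorial with hA
  set q : ℕ → ℝ := fun l => bstar l 0 / l.factorial with hq'
  set c : ℕ → ℝ := fun m => ∑ l ∈ Finset.range (m+1),
      q l * ((∏ i ∈ Finset.range (m - l), (x - (i:ℝ))) / (m-l).factorial) with hc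
  have ha : ∀ᶠ t : ℝ in 𝓝[≠] 0, HasSum (fun m : ℕ => A m * t ^ m)
      (((1 + t) - (1 + t)⁻¹) / (((1 + t) ^ lam - 1) / lam) * (1 + t) ^ x) := by
    filter_upwards [hbstar x] with t h
    have hfun : (fun m : ℕ => A m * t ^ m)
        = fun m : ℕ => bstar m x * t ^ m / m.factorial :=
      funext fun m => by rw [hA]; ring
    rw [hfun]
    exact h
  -- extract a radius for the series at 0
  have hb0 := hbstar 0
  rw [eventually_nhdsWithin_iff, Metric.eventually_nhds_iff] at hb0
  obtain ⟨ε, hε, H0⟩ := hb0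
  have hq : ∀ t : ℝ, t ≠ 0 → |t| < ε → HasSum (fun l : ℕ => q l * t ^ l)
      (((1 + t) - (1 + t)⁻¹) / (((1 + t) ^ lam - 1) / lam)) := by
    intro t ht htε
    have h := H0 (by simpa [Real.dist_eq] using htε) ht
    rw [Real.rpow_zero, mul_one] at h
    have hfun : (fun l : ℕ => q l * t ^ l)
        = fun l : ℕ => bstar l 0 * t ^ l / l.factorial :=
      funext fun l => by rw [hq']; ring
    rw [hfun]
    exact h
  have hεhalf : (0:ℝ) < ε / 2 := by positivity
  have hsum2 : Summable fun l => q l * (ε/2) ^ l :=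
    (hq (ε/2) hεhalf.ne' (by rw [abs_of_pos hεhalf]; linarith)).summable
  obtain ⟨C, hC⟩ := hsum2.tendsto_atTop_zero.norm.bddAbove_range
  have hqnorm : ∀ t : ℝ, |t| < ε/2 → Summable fun l => ‖q l * t ^ l‖ := by
    intro t htε
    have hρ : |t| / (ε/2) < 1 := (div_lt_one hεhalf).2 htε
    have hρ0 : 0 ≤ |t| / (ε/2) := by positivity
    refine Summable.of_nonneg_of_le (fun l => norm_nonneg _) (fun l => ?_)
      ((summable_geometric_of_lt_one hρ0 hρ).mul_left C)
    have hCl := hC (Set.mem_range_self l)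
    have hεl : ((ε/2:ℝ)) ^ l ≠ 0 := by positivity
    have h1 : ‖q l * t ^ l‖ = ‖q l * (ε/2) ^ l‖ * (|t| / (ε/2)) ^ l := by
      rw [norm_mul, norm_mul, norm_pow, norm_pow, Real.norm_eq_abs t,
        Real.norm_eq_abs ((ε:ℝ)/2), abs_of_pos hεhalf, div_pow]
      field_simp
      have hεε : ε ^ l * ε⁻¹ ^ l = 1 := by rw [← mul_pow, mul_inv_cancel₀ hε.ne', one_pow]
      linear_combination (-(‖q l‖ * |t| ^ l * 2 ^ l)) * hεε
    rw [h1]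
    have h2 : (0:ℝ) ≤ (|t| / (ε/2)) ^ l := by positivity
    exact mul_le_mul_of_nonneg_right hCl h2
  have hb : ∀ᶠ t : ℝ in 𝓝[≠] 0, HasSum (fun m : ℕ => c m * t ^ m)
      (((1 + t) - (1 + t)⁻¹) / (((1 + t) ^ lam - 1) / lam) * (1 + t) ^ x) := by
    have hδmin : (0:ℝ) < min (ε/2) 1 := lt_min hεhalf one_pos
    have hev : ∀ᶠ t : ℝ in 𝓝[≠] (0:ℝ), t ≠ 0 ∧ |t| < min (ε/2) 1 := by
      filter_upwards [self_mem_nhdsWithin,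
        eventually_nhdsWithin_of_eventually_nhds
          (Metric.eventually_nhds_iff.2 ⟨min (ε/2) 1, hδmin,
            fun {y} hy => by rw [Real.dist_eq, sub_zero] at hy; exact hy⟩)] with t h1 h2
      exact ⟨h1, h2⟩
    filter_upwards [hev] with t ht
    obtain ⟨ht0, htlt⟩ := ht
    have ht1 : |t| < 1 := lt_of_lt_of_le htlt (min_le_right _ _)
    have htε2 : |t| < ε/2 := lt_of_lt_of_le htlt (min_le_left _ _)
    have h1 := hq t ht0 (by linarith)
    have h1n := hqnorm t htε2
    have h2 := hasSum_binomial x ht1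
    have h2n := binom_summable_norm x ht1
    have h3 := hasSum_sum_range_mul_of_summable_norm h1n h2n
    rw [h1.tsum_eq, h2.tsum_eq] at h3
    have hterm : (fun m : ℕ => ∑ k ∈ Finset.range (m+1), (q k * t ^ k) *
        ((∏ i ∈ Finset.range (m-k), (x - (i:ℝ))) / (m-k).factorial * t ^ (m-k)))
        = fun m : ℕ => c m * t ^ m := by
      funext m
      rw [hc]
      simp only
      rw [Finset.sum_mul]
      refine Finset.sum_congr rfl fun k hk => ?_
      have hkm : k ≤ m := Nat.lt_succ_iff.mp (Finset.mem_range.mp hk)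
      have hpow : t ^ k * t ^ (m - k) = t ^ m := by
        rw [← pow_add, Nat.add_sub_cancel' hkm]
      calc (q k * t ^ k) * ((∏ i ∈ Finset.range (m-k), (x - (i:ℝ))) / (m-k).factorial
              * t ^ (m-k))
          = q k * ((∏ i ∈ Finset.range (m-k), (x - (i:ℝ))) / (m-k).factorial)
              * (t ^ k * t ^ (m-k)) := by ring
        _ = q k * ((∏ i ∈ Finset.range (m-k), (x - (i:ℝ))) / (m-k).factorial) * t ^ m := by
              rw [hpow]
    rw [hterm] at h3
    exact h3
  have key := coeff_unique ha hb
  have keyn := congrFun key n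
  rw [hA] at keyn
  simp only at keyn
  have hfactn : ((n.factorial : ℝ)) ≠ 0 := Nat.cast_ne_zero.2 n.factorial_ne_zero
  have hbn : bstar n x = (n.factorial : ℝ) * c n := by
    rw [← keyn]
    field_simp
  rw [hbn, hc]
  simp only
  rw [Finset.mul_sum]
  refine Finset.sum_congr rfl fun l hl => ?_
  have hln : l ≤ n := Nat.lt_succ_iff.mp (Finset.mem_range.mp hl)
  rw [hq']
  simp only
  rw [Nat.cast_choose ℝ hln]
  have h1 : ((l.factorial : ℝ)) ≠ 0 := Nat.cast_ne_zero.2 l.factorial_ne_zero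
  have h2 : (((n-l).factorial : ℝ)) ≠ 0 := Nat.cast_ne_zero.2 (n-l).factorial_ne_zero
  field_simp
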